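/- Let q = p^m with p ≥ 5 prime and let A : F_q → F_q be an Alltop function. For a, b ∈ F_q define v_{ab} ∈ ℂ^{F_q} by v_{ab}(x) = (1/√q)·χ(A(x+a) + b(x+a)), where χ(x) = e^{2πi·tr(x)/p} and tr : F_q → F_p is the absolute trace. Let C_A = {v_{ab} : a, b ∈ F_q} ∪ E, where E is the standard basis of ℂ^{F_q}. Then C_A is a set of q^2 + q unit vectors in ℂ^q whose maximum correlation amplitude satisfies I_max(C_A) = 1/√q. -/

import Mathlib

open Finset

/-- The difference function `Δ_{f,a}(x) = f(x+a) - f(x)`. -/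
def deltaFn {F : Type*} [Field F] (f : F → F) (a : F) : F → F := fun x => f (x + a) - f x

/-- `f` is planar if `Δ_{f,a}` is a bijection for every `a ≠ 0`. -/
def IsPlanar {F : Type*} [Field F] (f : F → F) : Prop :=
  ∀ a : F, a ≠ 0 → Function.Bijective (deltaFn f a)

/-- `f` is an Alltop function if `Δ_{f,a}` is planar for every `a ≠ 0`. -/
def IsAlltop {F : Type*} [Field F] (f : F → F) : Prop :=
  ∀ a : F, a ≠ 0 → IsPlanar (deltaFn f a)

/-- The additive character `χ(x) = e^{2πi·tr(x)/p}` of `F_{p^m}`, where `tr` is the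
absolute trace to `F_p = ZMod p`. -/
noncomputable def chi (p m : ℕ) [Fact p.Prime] (x : GaloisField p m) : ℂ :=
  Complex.exp (2 * Real.pi * Complex.I *
    ((Algebra.trace (ZMod p) (GaloisField p m) x).val : ℂ) / (p : ℂ))

/-- The standard Hermitian inner product `⟨u, w⟩ = ∑ x, conj (u x) * w x` on `ℂ^F`. -/
noncomputable def herm {F : Type*} [Fintype F] (u w : F → ℂ) : ℂ :=
  ∑ x : F, (starRingEnd ℂ) (u x) * w x

/-- The Alltop-type vector `v_{ab}(x) = q^{-1/2} χ(A(x+a) + b(x+a))` in `ℂ^{F_q}`,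
`q = p^m`. -/
noncomputable def alltopVec (p m : ℕ) [Fact p.Prime]
    (A : GaloisField p m → GaloisField p m) (a b : GaloisField p m) :
    GaloisField p m → ℂ :=
  fun x => ((1 / Real.sqrt ((p : ℝ) ^ m) : ℝ) : ℂ) * chi p m (A (x + a) + b * (x + a))

open scoped Classical in
/-- The standard basis vector `e_y` of `ℂ^{F_q}`. -/
noncomputable def stdVec (p m : ℕ) [Fact p.Prime] (y : GaloisField p m) : GaloisField p m → ℂ :=
  fun x => if x = y then 1 else 0

/- ### ψ : auxiliary character on ℤ -/

noncomputable def psi (p : ℕ) (n : ℤ) : ℂ :=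
  Complex.exp (2 * Real.pi * Complex.I * n / p)

lemma psi_add (p : ℕ) (a b : ℤ) : psi p (a + b) = psi p a * psi p b := by
  rw [psi, psi, psi, ← Complex.exp_add]
  congr 1
  push_cast
  ring

lemma psi_zero (p : ℕ) : psi p 0 = 1 := by simp [psi]

lemma psi_mul_p (p : ℕ) (hp : (p : ℂ) ≠ 0) (k : ℤ) : psi p (p * k) = 1 := by
  rw [psi]
  have : 2 * Real.pi * Complex.I * ((p : ℤ) * k : ℤ) / p = k * (2 * Real.pi * Complex.I) := by
    push_cast
    field_simp
  rw [this, Complex.exp_int_mul_two_pi_mul_I]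

lemma psi_congr (p : ℕ) (hp : (p : ℂ) ≠ 0) {a b : ℤ} (h : a ≡ b [ZMOD p]) :
    psi p a = psi p b := by
  obtain ⟨k, hk⟩ := Int.ModEq.dvd h
  have hb : b = a + p * k := by linarith [hk]
  rw [hb, psi_add, psi_mul_p p hp, mul_one]

lemma conj_psi (p : ℕ) (n : ℤ) : (starRingEnd ℂ) (psi p n) = psi p (-n) := by
  rw [psi, psi, ← Complex.exp_conj]
  congr 1
  simp [map_div₀, Complex.conj_I, map_ofNat]

/- ### χ basic facts -/

section Chi

variable (p m : ℕ) [Fact p.Prime]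

lemma pC_ne : (p : ℂ) ≠ 0 := by
  exact_mod_cast (Fact.out : p.Prime).ne_zero

lemma psi_zmod_congr {a b : ℤ} (h : (a : ZMod p) = (b : ZMod p)) : psi p a = psi p b :=
  psi_congr p (pC_ne p) ((ZMod.intCast_eq_intCast_iff _ _ _).mp h)

lemma chi_eq (x : GaloisField p m) :
    chi p m x = psi p ((Algebra.trace (ZMod p) (GaloisField p m) x).val : ℤ) := by
  rw [chi, psi]
  norm_num

lemma chi_zero : chi p m 0 = 1 := by
  rw [chi_eq]
  simp [psi_zero]

lemma chi_add (x y : GaloisField p m) : chi p m (x + y) = chi p m x * chi p m y := by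
  rw [chi_eq, chi_eq, chi_eq, ← psi_add]
  apply psi_zmod_congr
  push_cast [ZMod.natCast_val, ZMod.cast_id]
  rw [map_add]

lemma conj_chi (x : GaloisField p m) : (starRingEnd ℂ) (chi p m x) = chi p m (-x) := by
  rw [chi_eq, chi_eq, conj_psi]
  apply psi_zmod_congr
  push_cast [ZMod.natCast_val, ZMod.cast_id]
  rw [map_neg]

lemma chi_sub (x y : GaloisField p m) : chi p m (x - y) = chi p m x * (starRingEnd ℂ) (chi p m y) := by
  rw [conj_chi, ← chi_add, sub_eq_add_neg]

lemma abs_chi (x : GaloisField p m) : ‖chi p m x‖ = 1 := by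
  have h : (Complex.normSq (chi p m x) : ℂ) = 1 := by
    rw [← Complex.mul_conj, conj_chi, ← chi_add]
    simp [chi_zero]
  have h2 : Complex.normSq (chi p m x) = 1 := by exact_mod_cast h
  rw [Complex.norm_def, h2, Real.sqrt_one]

lemma exists_chi_ne_one : ∃ c : GaloisField p m, chi p m c ≠ 1 := by
  obtain ⟨y, hy⟩ := Algebra.trace_surjective (ZMod p) (GaloisField p m) 1
  refine ⟨y, ?_⟩
  rw [chi_eq, hy]
  have hp2 : 2 ≤ p := (Fact.out : p.Prime).two_le
  have hval : ((1 : ZMod p).val : ℤ) = 1 := by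
    have : (1 : ZMod p).val = 1 := by
      rw [ZMod.val_one_eq_one_mod]; exact Nat.mod_eq_of_lt (by omega)
    omega
  rw [hval]
  intro h
  rw [psi, Complex.exp_eq_one_iff] at h
  obtain ⟨n, hn⟩ := h
  have hne : (2 * Real.pi * Complex.I : ℂ) ≠ 0 := by
    simp [Real.pi_ne_zero, Complex.I_ne_zero]
  have hp0 : (p : ℂ) ≠ 0 := pC_ne p
  have h1 : (1 : ℂ) = n * p := by
    push_cast at hn
    field_simp at hn
    have := mul_right_cancel₀ hne
      (by linear_combination (2 * Real.pi * Complex.I) * hn : (1 : ℂ) * (2 * Real.pi * Complex.I)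
        = (n * p) * (2 * Real.pi * Complex.I))
    simpa using this
  have h2 : (1 : ℤ) = n * p := by exact_mod_cast h1
  have hdvd : (p : ℤ) ∣ 1 := Dvd.intro n (by linarith)
  have := Int.le_of_dvd one_pos hdvd
  omega

variable [Fintype (GaloisField p m)]

lemma sum_chi : ∑ x : GaloisField p m, chi p m x = 0 := by
  obtain ⟨c, hc⟩ := exists_chi_ne_one p m
  have h : chi p m c * ∑ x : GaloisField p m, chi p m x = ∑ x : GaloisField p m, chi p m x := by
    rw [Finset.mul_sum]
    calc ∑ x : GaloisField p m, chi p m c * chi p m x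
        = ∑ x : GaloisField p m, chi p m (c + x) := by
          refine Finset.sum_congr rfl fun x _ => ?_
          rw [chi_add]
      _ = ∑ x : GaloisField p m, chi p m x :=
          Fintype.sum_equiv (Equiv.addLeft c) _ _ (fun x => rfl)
  have h2 : (chi p m c - 1) * ∑ x : GaloisField p m, chi p m x = 0 := by
    rw [sub_mul, one_mul, h, sub_self]
  rcases mul_eq_zero.mp h2 with h3 | h3
  · exact absurd (sub_eq_zero.mp h3) hc
  · exact h3

lemma sum_chi_comp_bijective {g : GaloisField p m → GaloisField p m}
    (hg : Function.Bijective g) : ∑ x : GaloisField p m, chi p m (g x) = 0 := by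
  rw [Fintype.sum_bijective g hg _ _ (fun x => rfl)]
  exact sum_chi p m

lemma card_gf : (Fintype.card (GaloisField p m) : ℝ) = (p : ℝ) ^ m ∨ m = 0 := by
  rcases eq_or_ne m 0 with h | h
  · exact Or.inr h
  · left
    have := GaloisField.card p m h
    rw [Nat.card_eq_fintype_card] at this
    rw [this]
    push_cast
    rfl

end Chi

/- ### the planar exponential sum -/

lemma planar_sum (p m : ℕ) [Fact p.Prime] [Fintype (GaloisField p m)]
    (P : GaloisField p m → GaloisField p m) (hP : IsPlanar P) (e β : GaloisField p m) :
    ‖∑ x : GaloisField p m, chi p m (P x + e * x + β)‖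
      = Real.sqrt (Fintype.card (GaloisField p m)) := by
  set f : GaloisField p m → GaloisField p m := fun x => P x + e * x + β with hf
  set S := ∑ x : GaloisField p m, chi p m (f x) with hS
  have key : S * (starRingEnd ℂ) S = (Fintype.card (GaloisField p m) : ℂ) := by
    rw [hS, map_sum, Finset.sum_mul_sum]
    have step1 : ∀ x z : GaloisField p m,
        chi p m (f x) * (starRingEnd ℂ) (chi p m (f z)) = chi p m (f x - f z) := fun x z =>
      (chi_sub p m _ _).symm
    calc ∑ x : GaloisField p m, ∑ z : GaloisField p m,
            chi p m (f x) * (starRingEnd ℂ) (chi p m (f z))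
        = ∑ x : GaloisField p m, ∑ z : GaloisField p m, chi p m (f x - f z) := by
          exact Finset.sum_congr rfl fun x _ => Finset.sum_congr rfl fun z _ => step1 x z
      _ = ∑ z : GaloisField p m, ∑ x : GaloisField p m, chi p m (f x - f z) :=
          Finset.sum_comm
      _ = ∑ z : GaloisField p m, ∑ d : GaloisField p m, chi p m (f (z + d) - f z) := by
          refine Finset.sum_congr rfl fun z _ => ?_
          exact (Fintype.sum_equiv (Equiv.addLeft z) _ _ (fun d => rfl)).symm
      _ = ∑ d : GaloisField p m, ∑ z : GaloisField p m, chi p m (f (z + d) - f z) :=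
          Finset.sum_comm
      _ = ∑ d : GaloisField p m, ∑ z : GaloisField p m,
            chi p m (deltaFn P d z) * chi p m (e * d) := by
          refine Finset.sum_congr rfl fun d _ => Finset.sum_congr rfl fun z _ => ?_
          rw [← chi_add]
          congr 1
          simp only [hf, deltaFn]
          ring
      _ = (Fintype.card (GaloisField p m) : ℂ) := by
          rw [Finset.sum_eq_single 0]
          · simp only [deltaFn, add_zero, sub_self, chi_zero, mul_zero, one_mul]
            simp [Finset.card_univ]
          · intro d _ hd
            rw [← Finset.sum_mul, sum_chi_comp_bijective p m (hP d hd), zero_mul]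
          · intro h
            exact absurd (Finset.mem_univ 0) h
  have hnormSq : Complex.normSq S = (Fintype.card (GaloisField p m) : ℝ) := by
    have := key
    rw [Complex.mul_conj] at this
    exact_mod_cast this
  rw [Complex.norm_def, hnormSq]

/- ### vectors and correlations -/

section Corr

variable (p m : ℕ) [Fact p.Prime] [Fintype (GaloisField p m)]

lemma chi_mul_conj (x : GaloisField p m) :
    chi p m x * (starRingEnd ℂ) (chi p m x) = 1 := by
  rw [conj_chi, ← chi_add]
  simp [chi_zero]

lemma q_pos : (0 : ℝ) < (p : ℝ) ^ m := by
  have : 0 < p := (Fact.out : p.Prime).pos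
  positivity

lemma sqrtq_pos : (0 : ℝ) < Real.sqrt ((p : ℝ) ^ m) := Real.sqrt_pos.mpr (q_pos p m)

lemma card_eq (hm : m ≠ 0) : (Fintype.card (GaloisField p m) : ℝ) = (p : ℝ) ^ m := by
  rcases card_gf p m with h | h
  · exact h
  · exact absurd h hm

lemma c_sq : ((1 / Real.sqrt ((p : ℝ) ^ m) : ℝ) : ℂ) ^ 2 = ((((p : ℝ) ^ m)⁻¹ : ℝ) : ℂ) := by
  rw [← Complex.ofReal_pow]
  congr 1
  rw [div_pow, one_pow, Real.sq_sqrt (q_pos p m).le, one_div]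

/-- Expansion of `herm` between two Alltop vectors. -/
lemma herm_vv (A : GaloisField p m → GaloisField p m) (a b a' b' : GaloisField p m) :
    herm (alltopVec p m A a b) (alltopVec p m A a' b') =
      ((((p : ℝ) ^ m)⁻¹ : ℝ) : ℂ) * ∑ x : GaloisField p m,
        chi p m ((A (x + a') + b' * (x + a')) - (A (x + a) + b * (x + a))) := by
  rw [herm, Finset.mul_sum]
  refine Finset.sum_congr rfl fun x _ => ?_
  rw [alltopVec, alltopVec, map_mul, Complex.conj_ofReal, chi_sub]
  rw [← c_sq p m]
  ring

lemma herm_vv_self (hm : m ≠ 0) (A : GaloisField p m → GaloisField p m)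
    (a b : GaloisField p m) : herm (alltopVec p m A a b) (alltopVec p m A a b) = 1 := by
  rw [herm_vv]
  simp only [sub_self, chi_zero]
  rw [Finset.sum_const, Finset.card_univ, nsmul_eq_mul, mul_one]
  rw [← Complex.ofReal_natCast, ← Complex.ofReal_mul, card_eq p m hm]
  rw [inv_mul_cancel₀ (q_pos p m).ne']
  norm_num

lemma abs_herm_vv (hm : m ≠ 0) (A : GaloisField p m → GaloisField p m) (hA : IsAlltop A)
    (a b a' b' : GaloisField p m) (h : a ≠ a' ∨ (a = a' ∧ b ≠ b')) :
    ‖herm (alltopVec p m A a b) (alltopVec p m A a' b')‖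
      ≤ 1 / Real.sqrt ((p : ℝ) ^ m) := by
  rw [herm_vv, norm_mul]
  have habs : ‖((((p : ℝ) ^ m)⁻¹ : ℝ) : ℂ)‖ = ((p : ℝ) ^ m)⁻¹ := by
    rw [Complex.norm_real, Real.norm_eq_abs, abs_of_nonneg (by positivity)]
  rw [habs]
  rcases h with h | ⟨rfl, hb⟩
  · -- a ≠ a' : planar sum, exact value 1/√q
    set P := deltaFn A (a' - a) with hP
    have hPplanar : IsPlanar P := hA _ (sub_ne_zero.mpr (Ne.symm h))
    have harg : ∀ x : GaloisField p m,
        (A (x + a') + b' * (x + a')) - (A (x + a) + b * (x + a))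
          = P (x + a) + (b' - b) * (x + a) + b' * (a' - a) := by
      intro x
      simp only [hP, deltaFn, show ∀ x : GaloisField p m, x + a + (a' - a) = x + a'
        from fun x => by ring]
      ring
    have hre : ∑ x : GaloisField p m,
        chi p m ((A (x + a') + b' * (x + a')) - (A (x + a) + b * (x + a)))
        = ∑ y : GaloisField p m, chi p m (P y + (b' - b) * y + b' * (a' - a)) := by
      rw [Fintype.sum_equiv (Equiv.addRight a)
        (fun x => chi p m ((A (x + a') + b' * (x + a')) - (A (x + a) + b * (x + a))))
        (fun y => chi p m (P y + (b' - b) * y + b' * (a' - a)))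
        (fun x => by simp only [Equiv.coe_addRight]; rw [harg x])]
    rw [hre, planar_sum p m P hPplanar, card_eq p m hm]
    rw [inv_mul_eq_div, div_le_div_iff₀ (q_pos p m) (sqrtq_pos p m),
      Real.mul_self_sqrt (q_pos p m).le, one_mul]
  · -- a = a' : sum vanishes
    have harg : ∀ x : GaloisField p m,
        (A (x + a) + b' * (x + a)) - (A (x + a) + b * (x + a)) = (b' - b) * (x + a) := by
      intro x; ring
    have hbij : Function.Bijective (fun x : GaloisField p m => (b' - b) * (x + a)) := by
      have h1 : Function.Bijective (fun x : GaloisField p m => x + a) :=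
        (Equiv.addRight a).bijective
      have h2 : Function.Bijective (fun y : GaloisField p m => (b' - b) * y) :=
        (Equiv.mulLeft₀ (b' - b) (sub_ne_zero.mpr (Ne.symm hb))).bijective
      exact h2.comp h1
    have : ∑ x : GaloisField p m,
        chi p m ((A (x + a) + b' * (x + a)) - (A (x + a) + b * (x + a))) = 0 := by
      calc ∑ x : GaloisField p m,
            chi p m ((A (x + a) + b' * (x + a)) - (A (x + a) + b * (x + a)))
          = ∑ x : GaloisField p m, chi p m ((b' - b) * (x + a)) :=
            Finset.sum_congr rfl fun x _ => by rw [harg x]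
        _ = 0 := sum_chi_comp_bijective p m hbij
    rw [this]
    simp

end Corr

section Std

variable (p m : ℕ) [Fact p.Prime] [Fintype (GaloisField p m)]

lemma abs_alltopVec_apply (A : GaloisField p m → GaloisField p m) (a b x : GaloisField p m) :
    ‖alltopVec p m A a b x‖ = 1 / Real.sqrt ((p : ℝ) ^ m) := by
  rw [alltopVec, norm_mul, abs_chi, mul_one, Complex.norm_real, Real.norm_eq_abs,
    abs_of_nonneg (by positivity)]

lemma herm_v_std (A : GaloisField p m → GaloisField p m) (a b y : GaloisField p m) :
    herm (alltopVec p m A a b) (stdVec p m y)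
      = (starRingEnd ℂ) (alltopVec p m A a b y) := by
  classical
  rw [herm]
  simp only [stdVec, mul_ite, mul_one, mul_zero]
  rw [Finset.sum_ite_eq' Finset.univ y]
  simp

lemma herm_std_v (A : GaloisField p m → GaloisField p m) (a b y : GaloisField p m) :
    herm (stdVec p m y) (alltopVec p m A a b) = alltopVec p m A a b y := by
  classical
  rw [herm]
  simp only [stdVec]
  have : ∀ x : GaloisField p m, (starRingEnd ℂ) (if x = y then (1:ℂ) else 0)
      * alltopVec p m A a b x = if x = y then alltopVec p m A a b x else 0 := by
    intro x
    split <;> simp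
  simp only [this]
  rw [Finset.sum_ite_eq' Finset.univ y]
  simp

open scoped Classical in
lemma herm_std_std (y y' : GaloisField p m) :
    herm (stdVec p m y) (stdVec p m y') = if y = y' then 1 else 0 := by
  classical
  rw [herm]
  simp only [stdVec]
  have : ∀ x : GaloisField p m, (starRingEnd ℂ) (if x = y then (1:ℂ) else 0)
      * (if x = y' then (1:ℂ) else 0) = if x = y then (if x = y' then (1:ℂ) else 0) else 0 := by
    intro x
    split <;> simp
  simp only [this]
  rw [Finset.sum_ite_eq' Finset.univ y]
  simp

end Std

theorem alltop_signal_set (p m : ℕ) [Fact p.Prime] [Fintype (GaloisField p m)]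
    (hp : 5 ≤ p) (hm : 0 < m) (A : GaloisField p m → GaloisField p m) (hA : IsAlltop A)
    (C : Set (GaloisField p m → ℂ))
    (hC : C = {w | ∃ a b : GaloisField p m, w = alltopVec p m A a b} ∪
              {w | ∃ y : GaloisField p m, w = stdVec p m y}) :
    -- C consists of q^2 + q unit vectors
    C.ncard = (p ^ m) ^ 2 + p ^ m ∧
    (∀ w ∈ C, herm w w = 1) ∧
    -- and its maximum correlation amplitude is 1/√q
    IsGreatest {t : ℝ | ∃ u ∈ C, ∃ w ∈ C, u ≠ w ∧ t = ‖herm u w‖}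
      (1 / Real.sqrt ((p : ℝ) ^ m)) := by
  have hm' : m ≠ 0 := hm.ne'
  have hq1 : (1 : ℝ) < (p : ℝ) ^ m := by
    have hp1 : (1 : ℝ) < (p : ℝ) := by exact_mod_cast (by omega : 1 < p)
    exact one_lt_pow₀ hp1 hm'
  have hs1 : (1 : ℝ) < Real.sqrt ((p : ℝ) ^ m) := by
    rw [show (1 : ℝ) = Real.sqrt 1 by simp]
    exact Real.sqrt_lt_sqrt (by norm_num) hq1
  have hclt : 1 / Real.sqrt ((p : ℝ) ^ m) < 1 := by
    rw [div_lt_one (by linarith)]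
    exact hs1
  have hcpos : (0 : ℝ) < 1 / Real.sqrt ((p : ℝ) ^ m) := by
    have := sqrtq_pos p m
    positivity
  have key : ∀ a b a' b' : GaloisField p m, ¬(a = a' ∧ b = b') →
      ‖herm (alltopVec p m A a b) (alltopVec p m A a' b')‖
        ≤ 1 / Real.sqrt ((p : ℝ) ^ m) := by
    intro a b a' b' hne
    apply abs_herm_vv p m hm' A hA
    by_cases h : a = a'
    · exact Or.inr ⟨h, fun hb => hne ⟨h, hb⟩⟩
    · exact Or.inl h
  have hv_inj : ∀ a b a' b' : GaloisField p m,
      alltopVec p m A a b = alltopVec p m A a' b' → a = a' ∧ b = b' := by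
    intro a b a' b' he
    by_contra hne
    have h1 := key a b a' b' hne
    rw [← he, herm_vv_self p m hm'] at h1
    rw [norm_one] at h1
    linarith
  have hv_ne_std : ∀ a b y : GaloisField p m, alltopVec p m A a b ≠ stdVec p m y := by
    intro a b y he
    have h1 : ‖herm (alltopVec p m A a b) (stdVec p m y)‖
        = 1 / Real.sqrt ((p : ℝ) ^ m) := by
      rw [herm_v_std, Complex.norm_conj, abs_alltopVec_apply]
    rw [he, herm_std_std, if_pos rfl, norm_one] at h1
    linarith
  have hstd_inj : Function.Injective (stdVec p m) := by
    intro y y' h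
    by_contra hne
    have := congrFun h y
    simp only [stdVec, if_pos rfl] at this
    rw [if_neg hne] at this
    exact one_ne_zero this
  refine ⟨?_, ?_, ?_, ?_⟩
  · -- cardinality
    have hS1 : {w | ∃ a b : GaloisField p m, w = alltopVec p m A a b}
        = Set.range (fun ab : GaloisField p m × GaloisField p m =>
            alltopVec p m A ab.1 ab.2) := by
      ext w
      constructor
      · rintro ⟨a, b, rfl⟩; exact ⟨(a, b), rfl⟩
      · rintro ⟨⟨a, b⟩, rfl⟩; exact ⟨a, b, rfl⟩
    have hS2 : {w | ∃ y : GaloisField p m, w = stdVec p m y} = Set.range (stdVec p m) := by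
      ext w
      constructor
      · rintro ⟨y, rfl⟩; exact ⟨y, rfl⟩
      · rintro ⟨y, rfl⟩; exact ⟨y, rfl⟩
    have hfinj : Function.Injective
        (fun ab : GaloisField p m × GaloisField p m => alltopVec p m A ab.1 ab.2) := by
      rintro ⟨a, b⟩ ⟨a', b'⟩ h
      obtain ⟨h1, h2⟩ := hv_inj a b a' b' h
      exact Prod.ext h1 h2
    have hdisj : Disjoint {w : GaloisField p m → ℂ | ∃ a b, w = alltopVec p m A a b}
        {w | ∃ y, w = stdVec p m y} := by
      rw [Set.disjoint_left]
      rintro w ⟨a, b, rfl⟩ ⟨y, hy⟩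
      exact hv_ne_std a b y hy
    rw [hC, Set.ncard_union_eq hdisj (hS1 ▸ Set.finite_range _) (hS2 ▸ Set.finite_range _)]
    have hc1 : {w | ∃ a b : GaloisField p m, w = alltopVec p m A a b}.ncard = (p ^ m) ^ 2 := by
      rw [hS1, ← Set.image_univ, Set.ncard_image_of_injective _ hfinj, Set.ncard_univ,
        Nat.card_prod, GaloisField.card p m hm', sq]
    have hc2 : {w | ∃ y : GaloisField p m, w = stdVec p m y}.ncard = p ^ m := by
      rw [hS2, ← Set.image_univ, Set.ncard_image_of_injective _ hstd_inj, Set.ncard_univ,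
        GaloisField.card p m hm']
    rw [hc1, hc2]
  · -- unit vectors
    rw [hC]
    rintro w (⟨a, b, rfl⟩ | ⟨y, rfl⟩)
    · exact herm_vv_self p m hm' A a b
    · rw [herm_std_std, if_pos rfl]
  · -- membership
    refine ⟨alltopVec p m A 0 0, ?_, stdVec p m 0, ?_, hv_ne_std 0 0 0, ?_⟩
    · rw [hC]; exact Or.inl ⟨0, 0, rfl⟩
    · rw [hC]; exact Or.inr ⟨0, rfl⟩
    · rw [herm_v_std, Complex.norm_conj, abs_alltopVec_apply]
  · -- upper bound
    rintro t ⟨u, hu, w, hw, hne, rfl⟩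
    rw [hC] at hu hw
    rcases hu with ⟨a, b, rfl⟩ | ⟨y, rfl⟩ <;> rcases hw with ⟨a', b', rfl⟩ | ⟨y', rfl⟩
    · refine key a b a' b' ?_
      rintro ⟨rfl, rfl⟩
      exact hne rfl
    · rw [herm_v_std, Complex.norm_conj, abs_alltopVec_apply]
    · rw [herm_std_v, abs_alltopVec_apply]
    · have hyy : y ≠ y' := by rintro rfl; exact hne rfl
      rw [herm_std_std, if_neg hyy, norm_zero]
      exact hcpos.le
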